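/- For every x ∈ [0,1]^n, the mean-field maps satisfy the componentwise bounds φ(x) ⪯ ψ(x) ⪯ (β·A_C + (1−δ)·I_n)·x; that is, for each i, φ_i(x) ≤ ψ_i(x) ≤ (1−δ)·x_i + β·Σ_{j∈N_i^C} x_j. -/

import Mathlib

open Finset Filter Topology Matrix

noncomputable section

/-- Awareness information received by node `i`: a weighted combination of the fraction of
infected social-network neighbors and the global fraction of infected nodes. -/
def infoAwareness (n : ℕ) (GI : SimpleGraph (Fin n)) [DecidableRel GI.Adj]
    (α : ℝ) (x : Fin n → ℝ) (i : Fin n) : ℝ :=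
  (α / ((GI.neighborFinset i).card : ℝ)) * ∑ j ∈ GI.neighborFinset i, x j
    + ((1 - α) / (n : ℝ)) * ∑ j, x j

/-- Social distancing action of node `i`. -/
def distAction (n : ℕ) (GI : SimpleGraph (Fin n)) [DecidableRel GI.Adj]
    (α : ℝ) (x : Fin n → ℝ) (i : Fin n) : ℝ :=
  1 - infoAwareness n GI α x i

/-- Benchmark susceptible-to-infected probability `p01_i(x)`. -/
def p01Bench (n : ℕ) (GC : SimpleGraph (Fin n)) [DecidableRel GC.Adj]
    (β : ℝ) (x : Fin n → ℝ) (i : Fin n) : ℝ :=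
  1 - ∏ j ∈ GC.neighborFinset i, (1 - β * x j)

/-- Distancing susceptible-to-infected probability `p01d_i(x)`. -/
def p01Dist (n : ℕ) (GC GI : SimpleGraph (Fin n)) [DecidableRel GC.Adj] [DecidableRel GI.Adj]
    (α β : ℝ) (x : Fin n → ℝ) (i : Fin n) : ℝ :=
  1 - ∏ j ∈ GC.neighborFinset i, (1 - β * distAction n GI α x i * x j)

/-- Distancing mean-field map `φ`. -/
def phiMap (n : ℕ) (GC GI : SimpleGraph (Fin n)) [DecidableRel GC.Adj] [DecidableRel GI.Adj]
    (α β δ : ℝ) (x : Fin n → ℝ) (i : Fin n) : ℝ :=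
  (1 - δ) * x i + (1 - (1 - δ) * x i) * p01Dist n GC GI α β x i

/-- Benchmark mean-field map `ψ`. -/
def psiMap (n : ℕ) (GC : SimpleGraph (Fin n)) [DecidableRel GC.Adj]
    (β δ : ℝ) (x : Fin n → ℝ) (i : Fin n) : ℝ :=
  (1 - δ) * x i + (1 - (1 - δ) * x i) * p01Bench n GC β x i

end


private lemma one_sub_prod_le_sum {ι : Type*} (s : Finset ι) (t : ι → ℝ)
    (h0 : ∀ j ∈ s, 0 ≤ t j) (h1 : ∀ j ∈ s, t j ≤ 1) :
    1 - ∏ j ∈ s, (1 - t j) ≤ ∑ j ∈ s, t j := by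
  induction s using Finset.cons_induction with
  | empty => simp
  | cons a s hns ih =>
    rw [Finset.prod_cons, Finset.sum_cons]
    have h0' : ∀ j ∈ s, 0 ≤ t j := fun j hj => h0 j (Finset.mem_cons_of_mem hj)
    have h1' : ∀ j ∈ s, t j ≤ 1 := fun j hj => h1 j (Finset.mem_cons_of_mem hj)
    have ihs := ih h0' h1'
    have ha0 := h0 a (Finset.mem_cons_self a s)
    have ha1 := h1 a (Finset.mem_cons_self a s)
    have hp0 : (0:ℝ) ≤ ∏ j ∈ s, (1 - t j) :=
      Finset.prod_nonneg fun j hj => by linarith [h1' j hj]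
    have hp1 : ∏ j ∈ s, (1 - t j) ≤ 1 :=
      Finset.prod_le_one (fun j hj => by linarith [h1' j hj]) (fun j hj => by linarith [h0' j hj])
    nlinarith

/-- for every `x ∈ [0,1]^n` the mean-field maps satisfy the componentwise
bounds `φ(x) ⪯ ψ(x) ⪯ (β·A_C + (1−δ)·I_n)·x`, i.e. for each `i`,
`φ_i(x) ≤ ψ_i(x) ≤ (1−δ)·x_i + β·Σ_{j ∈ N_i^C} x_j`. -/
theorem phi_le_psi_le_linear
    (n : ℕ) (hn : 0 < n) (GC GI : SimpleGraph (Fin n)) [DecidableRel GC.Adj] [DecidableRel GI.Adj]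
    (hGI : ∀ i, (GI.neighborFinset i).Nonempty)
    (α β δ : ℝ) (hα : α ∈ Set.Icc (0:ℝ) 1) (hβ : β ∈ Set.Ioo (0:ℝ) 1)
    (hδ : δ ∈ Set.Ioo (0:ℝ) 1)
    (x : Fin n → ℝ) (hx : ∀ i, x i ∈ Set.Icc (0:ℝ) 1) (i : Fin n) :
    phiMap n GC GI α β δ x i ≤ psiMap n GC β δ x i ∧
    psiMap n GC β δ x i ≤ (1 - δ) * x i + β * ∑ j ∈ GC.neighborFinset i, x j := by
  obtain ⟨hα0, hα1⟩ := hα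
  obtain ⟨hβ0, hβ1⟩ := hβ
  obtain ⟨hδ0, hδ1⟩ := hδ
  have hx0 : ∀ j, 0 ≤ x j := fun j => (hx j).1
  have hx1 : ∀ j, x j ≤ 1 := fun j => (hx j).2
  -- awareness bounds
  have hcard : (0:ℝ) < ((GI.neighborFinset i).card : ℝ) := by
    exact_mod_cast Finset.card_pos.mpr (hGI i)
  have hnpos : (0:ℝ) < (n:ℝ) := by exact_mod_cast hn
  have hsum1 : ∑ j ∈ GI.neighborFinset i, x j ≤ ((GI.neighborFinset i).card : ℝ) := by
    calc ∑ j ∈ GI.neighborFinset i, x j ≤ ∑ j ∈ GI.neighborFinset i, 1 :=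
          Finset.sum_le_sum fun j _ => hx1 j
      _ = _ := by simp
  have hsum2 : ∑ j, x j ≤ (n:ℝ) := by
    calc ∑ j, x j ≤ ∑ _j : Fin n, (1:ℝ) := Finset.sum_le_sum fun j _ => hx1 j
      _ = (n:ℝ) := by simp
  have hs1nn : (0:ℝ) ≤ ∑ j ∈ GI.neighborFinset i, x j := Finset.sum_nonneg fun j _ => hx0 j
  have hs2nn : (0:ℝ) ≤ ∑ j, x j := Finset.sum_nonneg fun j _ => hx0 j
  have hmu0 : 0 ≤ infoAwareness n GI α x i := by
    unfold infoAwareness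
    have := div_nonneg hα0 hcard.le
    have := div_nonneg (by linarith : (0:ℝ) ≤ 1 - α) hnpos.le
    positivity
  have hmu1 : infoAwareness n GI α x i ≤ 1 := by
    unfold infoAwareness
    have h1 : (α / ((GI.neighborFinset i).card : ℝ)) * ∑ j ∈ GI.neighborFinset i, x j ≤ α := by
      rw [div_mul_eq_mul_div, div_le_iff₀ hcard]
      nlinarith
    have h2 : ((1 - α) / (n : ℝ)) * ∑ j, x j ≤ 1 - α := by
      rw [div_mul_eq_mul_div, div_le_iff₀ hnpos]
      nlinarith
    linarith
  have ha0 : 0 ≤ distAction n GI α x i := by unfold distAction; linarith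
  have ha1 : distAction n GI α x i ≤ 1 := by unfold distAction; linarith
  clear hmu0 hmu1
  obtain ⟨a, hadef⟩ : ∃ a, a = distAction n GI α x i := ⟨_, rfl⟩
  rw [← hadef] at ha0 ha1
  -- factor bounds
  have hfac : ∀ j, 0 ≤ 1 - β * x j ∧ 1 - β * x j ≤ 1 := by
    intro j; constructor <;> nlinarith [hx0 j, hx1 j]
  have hfacd : ∀ j, 0 ≤ 1 - β * a * x j ∧ 1 - β * a * x j ≤ 1 := by
    intro j
    have h1 : 0 ≤ a * x j := mul_nonneg ha0 (hx0 j)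
    have h2 : a * x j ≤ 1 := mul_le_one₀ ha1 (hx0 j) (hx1 j)
    constructor <;> nlinarith
  -- products
  have hprod_le : ∏ j ∈ GC.neighborFinset i, (1 - β * x j)
      ≤ ∏ j ∈ GC.neighborFinset i, (1 - β * a * x j) := by
    apply Finset.prod_le_prod (fun j _ => (hfac j).1)
    intro j _
    nlinarith [mul_nonneg (mul_nonneg hβ0.le (hx0 j)) (by linarith : (0:ℝ) ≤ 1 - a)]
  have hp01_le : p01Dist n GC GI α β x i ≤ p01Bench n GC β x i := by
    unfold p01Dist p01Bench; rw [← hadef]; linarith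
  have hpB0 : 0 ≤ p01Bench n GC β x i := by
    unfold p01Bench
    have : ∏ j ∈ GC.neighborFinset i, (1 - β * x j) ≤ 1 :=
      Finset.prod_le_one (fun j _ => (hfac j).1) (fun j _ => (hfac j).2)
    linarith
  have hpD0 : 0 ≤ p01Dist n GC GI α β x i := by
    unfold p01Dist; rw [← hadef]
    have : ∏ j ∈ GC.neighborFinset i, (1 - β * a * x j) ≤ 1 :=
      Finset.prod_le_one (fun j _ => (hfacd j).1) (fun j _ => (hfacd j).2)
    linarith
  have hcoef0 : 0 ≤ 1 - (1 - δ) * x i := by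
    have := mul_le_one₀ (by linarith : (1:ℝ) - δ ≤ 1) (hx0 i) (hx1 i); linarith
  have hcoef1 : 1 - (1 - δ) * x i ≤ 1 := by
    have := mul_nonneg (by linarith : (0:ℝ) ≤ 1 - δ) (hx0 i); linarith
  constructor
  · unfold phiMap psiMap
    exact add_le_add le_rfl (mul_le_mul_of_nonneg_left hp01_le hcoef0)
  · unfold psiMap
    have hlin : p01Bench n GC β x i ≤ β * ∑ j ∈ GC.neighborFinset i, x j := by
      unfold p01Bench
      rw [Finset.mul_sum]
      have := one_sub_prod_le_sum (GC.neighborFinset i) (fun j => β * x j)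
        (fun j _ => mul_nonneg hβ0.le (hx0 j)) (fun j _ => mul_le_one₀ hβ1.le (hx0 j) (hx1 j))
      simpa using this
    have hle : (1 - (1 - δ) * x i) * p01Bench n GC β x i ≤ p01Bench n GC β x i :=
      mul_le_of_le_one_left hpB0 hcoef1
    linarith
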